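/- For every positive equivalence relation η, the ascending family 𝒜_η is weakly confidently learnable but not confidently learnable. -/

import Mathlib

namespace PEL

/-- Evaluation of the `e`-th partial recursive function (via the standard
numbering of `Nat.Partrec.Code`). -/
def evalCode (e : ℕ) (x : ℕ) : Part ℕ :=
  (Denumerable.ofNat Nat.Partrec.Code e).eval x

/-- The `e`-th recursively enumerable set `W_e = dom φ_e`. -/
def W (e : ℕ) : Set ℕ := {x | (evalCode e x).Dom}

/-- A set is r.e. iff it equals some `W_e`. -/
def RESet (S : Set ℕ) : Prop := ∃ e, W e = S

/-- A positive equivalence relation: an r.e. equivalence relation on ℕ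
with infinitely many equivalence classes. -/
structure PosEq where
  rel : ℕ → ℕ → Prop
  equiv : Equivalence rel
  re : ∃ e, ∀ x y, rel x y ↔ Nat.pair x y ∈ W e
  classes_infinite : (Set.range fun x => {y | rel x y}).Infinite

/-- The η-equivalence class of `x`. -/
def classOf (η : PosEq) (x : ℕ) : Set ℕ := {y | η.rel x y}

/-- A set is η-closed iff it is a union of η-equivalence classes. -/
def EtaClosed (η : PosEq) (S : Set ℕ) : Prop := ∀ x ∈ S, classOf η x ⊆ S

/-- A set is η-finite iff it is a union of finitely many η-equivalence classes. -/
def EtaFinite (η : PosEq) (S : Set ℕ) : Prop :=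
  EtaClosed η S ∧ (classOf η '' S).Finite

/-- A set is η-infinite iff it is a union of infinitely many η-equivalence classes. -/
def EtaInfinite (η : PosEq) (S : Set ℕ) : Prop :=
  EtaClosed η S ∧ (classOf η '' S).Infinite

/-- `f` is a one-one uniformly r.e. numbering of the class `C`:
`f` is computable, `i ↦ W_{f i}` is injective, and `C = {W_{f i} : i ∈ ℕ}`. -/
def OneOneNumbering (f : ℕ → ℕ) (C : Set (Set ℕ)) : Prop :=
  Computable f ∧ (∀ i j, W (f i) = W (f j) → i = j) ∧ C = Set.range fun i => W (f i)

/-- An η-family: an (automatically infinite) class of η-closed r.e. sets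
admitting a one-one uniformly r.e. numbering. -/
def EtaFamily (η : PosEq) (C : Set (Set ℕ)) : Prop :=
  (∀ L ∈ C, EtaClosed η L) ∧ ∃ f, OneOneNumbering f C

/-- `a η n` is the `n`-th (in ascending order) least representative of an
η-equivalence class. -/
noncomputable def a (η : PosEq) (n : ℕ) : ℕ := Nat.nth (fun x => ∀ y, η.rel x y → x ≤ y) n

/-- `A η n = [a_0] ∪ … ∪ [a_{n-1}]`. -/
def A (η : PosEq) (n : ℕ) : Set ℕ := {x | ∃ m < n, η.rel (a η m) x}

/-- The ascending family `𝒜_η = {A_n : n ∈ ℕ}`. -/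
def ascendingFamily (η : PosEq) : Set (Set ℕ) := Set.range (A η)

/-- A learner: a map from finite sequences over ℕ ∪ {#} (with `none` as the
pause symbol `#`) to hypotheses in ℕ ∪ {?} (with `none` as `?`). -/
abbrev Learner := List (Option ℕ) → Option ℕ

/-- The content of a text. -/
def cntT (T : ℕ → Option ℕ) : Set ℕ := {x | ∃ n, T n = some x}

/-- `T` is a text for `L`. -/
def IsText (T : ℕ → Option ℕ) (L : Set ℕ) : Prop := cntT T = L

/-- The initial segment `T[n] = T(0), …, T(n-1)`. -/
def seg (T : ℕ → Option ℕ) (n : ℕ) : List (Option ℕ) := (List.range n).map T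

/-- The content of a finite sequence. -/
def cntL (σ : List (Option ℕ)) : Set ℕ := {x | some x ∈ σ}

/-- Explanatory learning with hypotheses interpreted in hypothesis space `H`. -/
def ExLearnsIn (H : ℕ → Set ℕ) (M : Learner) (C : Set (Set ℕ)) : Prop :=
  ∀ L ∈ C, ∀ T, IsText T L →
    ∃ n e, M (seg T n) = some e ∧ H e = L ∧ ∀ j, n ≤ j → M (seg T j) = M (seg T n)

/-- Behaviourally correct learning with hypothesis space `H`. -/
def BCLearnsIn (H : ℕ → Set ℕ) (M : Learner) (C : Set (Set ℕ)) : Prop :=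
  ∀ L ∈ C, ∀ T, IsText T L →
    ∃ n, ∀ j, n ≤ j → ∃ e, M (seg T j) = some e ∧ H e = L

/-- Finite (one-shot) learning with hypothesis space `H`. -/
def FinLearnsIn (H : ℕ → Set ℕ) (M : Learner) (C : Set (Set ℕ)) : Prop :=
  ∀ L ∈ C, ∀ T, IsText T L →
    ∃ n e, M (seg T n) = some e ∧ H e = L ∧ (∀ m, m < n → M (seg T m) = none) ∧
      ∀ j, n ≤ j → M (seg T j) = M (seg T n)

/-- The sequence of hypotheses of `M` on text `T` converges. -/
def ConvergesOn (M : Learner) (T : ℕ → Option ℕ) : Prop :=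
  ∃ n, ∀ j, n ≤ j → M (seg T j) = M (seg T n)

/-- Confident learning with hypothesis space `H`: explanatory learning with
convergence on every text for every subset of ℕ. -/
def ConfLearnsIn (H : ℕ → Set ℕ) (M : Learner) (C : Set (Set ℕ)) : Prop :=
  ExLearnsIn H M C ∧ ∀ T, ConvergesOn M T

/-- Vacillatory learning with hypothesis space `H`. -/
def VacLearnsIn (H : ℕ → Set ℕ) (M : Learner) (C : Set (Set ℕ)) : Prop :=
  BCLearnsIn H M C ∧
    ∀ L ∈ C, ∀ T, IsText T L → {h : Option ℕ | ∃ n, 1 ≤ n ∧ M (seg T n) = h}.Finite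

/-- Weakly confident learning with hypothesis space `H`: explanatory learning
with convergence on every text consistent with the class. -/
def WConfLearnsIn (H : ℕ → Set ℕ) (M : Learner) (C : Set (Set ℕ)) : Prop :=
  ExLearnsIn H M C ∧ ∀ T, (∃ L ∈ C, cntT T ⊆ L) → ConvergesOn M T

def ExLearnable (C : Set (Set ℕ)) : Prop :=
  ∃ M : Learner, Computable M ∧ ExLearnsIn W M C

def BCLearnable (C : Set (Set ℕ)) : Prop :=
  ∃ M : Learner, Computable M ∧ BCLearnsIn W M C

def FinLearnable (C : Set (Set ℕ)) : Prop :=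
  ∃ M : Learner, Computable M ∧ FinLearnsIn W M C

def ConfLearnable (C : Set (Set ℕ)) : Prop :=
  ∃ M : Learner, Computable M ∧ ConfLearnsIn W M C

def VacLearnable (C : Set (Set ℕ)) : Prop :=
  ∃ M : Learner, Computable M ∧ VacLearnsIn W M C

def WConfLearnable (C : Set (Set ℕ)) : Prop :=
  ∃ M : Learner, Computable M ∧ WConfLearnsIn W M C



/-! ### Auxiliary material for the proof -/

section Aux

open Nat.Partrec (Code)
open Nat.Partrec.Code

variable {η : PosEq}

/-! #### Basic facts about minimal representatives and the sets `A η n` -/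

/-- minimal representative of the class of `x` -/
noncomputable def minRep (η : PosEq) (x : ℕ) : ℕ := sInf {y | η.rel x y}

lemma rel_self (η : PosEq) (x : ℕ) : η.rel x x := η.equiv.refl x

lemma rel_minRep (x : ℕ) : η.rel x (minRep η x) := Nat.sInf_mem ⟨x, rel_self η x⟩

lemma minRep_le {x y : ℕ} (h : η.rel x y) : minRep η x ≤ y := Nat.sInf_le h

/-- the minimality predicate used in `a` -/
def IsMinRep (η : PosEq) (x : ℕ) : Prop := ∀ y, η.rel x y → x ≤ y

lemma isMinRep_minRep (x : ℕ) : IsMinRep η (minRep η x) := by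
  intro y hy
  exact minRep_le (η.equiv.trans (rel_minRep x) hy)

lemma minRep_infinite : (setOf (IsMinRep η)).Infinite := by
  intro hfin
  have : (Set.range fun x => {y | η.rel x y}).Finite := by
    have hsub : (Set.range fun x => {y | η.rel x y}) ⊆
        (fun x => {y | η.rel x y}) '' (setOf (IsMinRep η)) := by
      rintro S ⟨x, rfl⟩
      refine ⟨minRep η x, isMinRep_minRep x, ?_⟩
      ext y
      constructor
      · exact fun hy => η.equiv.trans (rel_minRep x) hy
      · exact fun hy => η.equiv.trans (η.equiv.symm (rel_minRep x)) hy
    exact (hfin.image _).subset hsub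
  exact η.classes_infinite this

lemma isMinRep_a (n : ℕ) : IsMinRep η (a η n) :=
  Nat.nth_mem_of_infinite minRep_infinite n

lemma a_strictMono : StrictMono (a η) := Nat.nth_strictMono minRep_infinite

lemma exists_a_eq {x : ℕ} (hx : IsMinRep η x) : ∃ n, a η n = x := by
  have hmem : x ∈ Set.range (Nat.nth (IsMinRep η)) := by
    rw [Nat.range_nth_of_infinite minRep_infinite]; exact hx
  obtain ⟨n, hn⟩ := hmem
  exact ⟨n, hn⟩

lemma mem_A_of_lt_a {y n : ℕ} (h : y < a η n) : y ∈ A η n := by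
  obtain ⟨j, hj⟩ := exists_a_eq (isMinRep_minRep (η := η) y)
  have hle : minRep η y ≤ y := minRep_le (rel_self η y)
  have hjn : j < n := by
    have : a η j < a η n := by omega
    exact (a_strictMono.lt_iff_lt).mp this
  exact ⟨j, hjn, by rw [hj]; exact η.equiv.symm (rel_minRep y)⟩

lemma a_not_mem_A (n : ℕ) : a η n ∉ A η n := by
  rintro ⟨m, hm, hrel⟩
  have h1 : a η m ≤ a η n := isMinRep_a m _ hrel
  have h2 : a η n ≤ a η m := isMinRep_a n _ (η.equiv.symm hrel)
  have : a η m = a η n := le_antisymm h1 h2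
  have := (a_strictMono (η := η)).injective this
  omega

lemma A_closed {x y n : ℕ} (hx : x ∈ A η n) (h : η.rel x y) : y ∈ A η n := by
  obtain ⟨m, hm, hrel⟩ := hx
  exact ⟨m, hm, η.equiv.trans hrel h⟩

lemma A_eq_cl (n : ℕ) : A η n = {z | ∃ y, y < a η n ∧ η.rel y z} := by
  ext z
  constructor
  · rintro ⟨m, hm, hrel⟩
    exact ⟨a η m, a_strictMono hm, hrel⟩
  · rintro ⟨y, hy, hrel⟩
    exact A_closed (mem_A_of_lt_a hy) hrel

lemma a_mem_A {m n : ℕ} (h : m < n) : a η m ∈ A η n := ⟨m, h, rel_self η _⟩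

lemma A_mono {m n : ℕ} (h : m ≤ n) : A η m ⊆ A η n := by
  rintro x ⟨j, hj, hrel⟩; exact ⟨j, by omega, hrel⟩

lemma A_ne {m n : ℕ} (h : m < n) : A η m ≠ A η n := by
  intro he
  exact a_not_mem_A m (he ▸ a_mem_A h)

/-! #### Facts about texts and segments -/

lemma seg_length (T : ℕ → Option ℕ) (n : ℕ) : (seg T n).length = n := by
  simp [seg]

lemma seg_take (T : ℕ → Option ℕ) {m n : ℕ} (h : m ≤ n) : (seg T n).take m = seg T m := by
  simp [seg, ← List.map_take, List.take_range, Nat.min_eq_left h]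

lemma mem_seg_iff {T : ℕ → Option ℕ} {x s : ℕ} :
    some x ∈ seg T s ↔ ∃ i, i < s ∧ T i = some x := by
  simp only [seg, List.mem_map, List.mem_range]

lemma cntL_seg_subset {T : ℕ → Option ℕ} {s : ℕ} : cntL (seg T s) ⊆ cntT T := by
  intro x hx
  obtain ⟨i, _, hi⟩ := mem_seg_iff.mp hx
  exact ⟨i, hi⟩

lemma exists_text (L : Set ℕ) (hne : L.Nonempty) (σ : List (Option ℕ)) (hσ : cntL σ ⊆ L) :
    ∃ T, IsText T L ∧ seg T σ.length = σ := by
  obtain ⟨f, hf⟩ := (Set.to_countable L).exists_eq_range hne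
  refine ⟨fun i => if h : i < σ.length then σ.get ⟨i, h⟩ else some (f (i - σ.length)), ?_, ?_⟩
  · ext x
    constructor
    · rintro ⟨i, hi⟩
      dsimp only at hi
      by_cases h : i < σ.length
      · rw [dif_pos h] at hi
        exact hσ (by rw [cntL, Set.mem_setOf_eq, ← hi]; exact σ.get_mem _)
      · rw [dif_neg h] at hi
        rw [hf]
        exact ⟨i - σ.length, (Option.some_inj.mp hi)⟩
    · intro hx
      rw [hf] at hx
      obtain ⟨j, hj⟩ := hx
      refine ⟨σ.length + j, ?_⟩
      dsimp only
      rw [dif_neg (by omega)]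
      simp [hj]
  · apply List.ext_getElem
    · simp [seg]
    · intro i h1 h2
      simp only [seg, List.getElem_map, List.getElem_range]
      rw [seg_length] at h1
      rw [dif_pos h1]
      rfl

/-! #### The learner -/

/-- element-wise confirmation predicate -/
def predB (c : Code) (s y : ℕ) (o : Option ℕ) : Bool :=
  Option.casesOn o false (fun x => (evaln s c (Nat.pair x y)).isSome)

/-- `y` is confirmed in `σ`: some datum of σ is `evaln`-related to `y` within `σ.length` steps -/
def confB (c : Code) (σ : List (Option ℕ)) (y : ℕ) : Bool :=
  decide (σ.findIdx (predB c σ.length y) < σ.length)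

lemma confB_iff {c : Code} {σ : List (Option ℕ)} {y : ℕ} : confB c σ y = true ↔
    ∃ x, some x ∈ σ ∧ (evaln σ.length c (Nat.pair x y)).isSome := by
  rw [confB, decide_eq_true_iff, List.findIdx_lt_length]
  constructor
  · rintro ⟨o, ho, hp⟩
    cases o with
    | none => simp [predB] at hp
    | some x => exact ⟨x, ho, hp⟩
  · rintro ⟨x, hx, hp⟩
    exact ⟨some x, hx, hp⟩

/-- current guess: least unconfirmed `y ≤ σ.length` (and `σ.length+1` if all confirmed) -/
def mval (c : Code) (σ : List (Option ℕ)) : ℕ :=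
  (List.range (σ.length + 1)).findIdx (fun y => ! confB c σ y)

lemma mval_eq {c : Code} {σ : List (Option ℕ)} {z : ℕ} (hz : z ≤ σ.length)
    (hzu : confB c σ z = false)
    (hlt : ∀ y, y < z → confB c σ y = true) : mval c σ = z := by
  have hlen : (List.range (σ.length + 1)).length = σ.length + 1 := by simp
  have hzlt : z < (List.range (σ.length + 1)).length := by omega
  apply le_antisymm
  · by_contra h
    push_neg at h
    have h2 : z < (List.range (σ.length + 1)).findIdx (fun y => ! confB c σ y) := h
    have := List.not_of_lt_findIdx h2 (xs := List.range (σ.length + 1))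
    rw [List.getElem_range] at this
    simp [hzu] at this
  · by_contra h
    push_neg at h
    have hfl : mval c σ < (List.range (σ.length + 1)).length := by
      have := List.findIdx_le_length (p := fun y => ! confB c σ y) (xs := List.range (σ.length+1))
      rw [mval] at h ⊢
      omega
    have hpt := List.findIdx_getElem (w := by rw [mval] at hfl; exact hfl)
    rw [List.getElem_range] at hpt
    have h3 := hlt _ h
    rw [mval] at h3
    simp [h3] at hpt

/-- bounded existential, computably -/
def bexB (c : Code) (m z t : ℕ) : Bool :=
  decide ((List.range m).findIdx (fun y => (evaln t c (Nat.pair y z)).isSome) < m)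

lemma bexB_iff {c : Code} {m z t : ℕ} :
    bexB c m z t = true ↔ ∃ y, y < m ∧ (evaln t c (Nat.pair y z)).isSome := by
  have h := List.findIdx_lt_length (p := fun y => (evaln t c (Nat.pair y z)).isSome)
    (xs := List.range m)
  rw [List.length_range] at h
  rw [bexB, decide_eq_true_iff, h]
  simp only [List.mem_range]

/-- The partial function whose `m`-th section enumerates `cl([0,m))` -/
def Fcl (c : Code) : ℕ →. ℕ := fun p =>
  Nat.rfind (fun t => Part.some (bexB c p.unpair.1 p.unpair.2 t))

lemma bexB_primrec (c : Code) : Primrec₂ (fun p t : ℕ => bexB c p.unpair.1 p.unpair.2 t) := by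
  have hfind : Primrec (fun q : ℕ × ℕ =>
      (List.range q.1.unpair.1).findIdx (fun y => (evaln q.2 c (Nat.pair y q.1.unpair.2)).isSome)) := by
    apply Primrec.list_findIdx (f := fun q : ℕ × ℕ => List.range q.1.unpair.1)
    · exact Primrec.list_range.comp (Primrec.fst.comp (Primrec.unpair.comp Primrec.fst))
    · exact Primrec.option_isSome.comp (primrec_evaln.comp
        ((Primrec.snd.comp Primrec.fst).pair (Primrec.const c) |>.pair
          (Primrec₂.natPair.comp Primrec.snd
            (Primrec.snd.comp (Primrec.unpair.comp (Primrec.fst.comp Primrec.fst))))))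
  exact PrimrecPred.decide (Primrec.nat_lt.comp hfind (Primrec.fst.comp (Primrec.unpair.comp Primrec.fst)))

lemma Fcl_partrec (c : Code) : Nat.Partrec (Fcl c) := by
  rw [← Partrec.nat_iff]
  exact Partrec.rfind ((bexB_primrec c).to_comp.partrec₂)

noncomputable def c1 (c : Code) : Code := Classical.choose (exists_code.mp (Fcl_partrec c))

lemma eval_c1 (c : Code) : eval (c1 c) = Fcl c :=
  Classical.choose_spec (exists_code.mp (Fcl_partrec c))

lemma W_curry_c1 (c : Code) (m : ℕ) :
    W (Encodable.encode ((c1 c).curry m)) = {z | ∃ y, y < m ∧ (eval c (Nat.pair y z)).Dom} := by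
  ext z
  show (evalCode _ z).Dom ↔ _
  rw [evalCode, Denumerable.ofNat_encode, eval_curry, eval_c1]
  show (Nat.rfind _).Dom ↔ _
  refine Nat.rfind_dom.trans ?_
  simp only [Nat.unpair_pair, Part.mem_some_iff]
  constructor
  · rintro ⟨t, ht, -⟩
    obtain ⟨y, hy, hs⟩ := bexB_iff.mp ht.symm
    obtain ⟨v, hv⟩ := Option.isSome_iff_exists.mp hs
    exact ⟨y, hy, Part.dom_iff_mem.mpr ⟨v, evaln_sound hv⟩⟩
  · rintro ⟨y, hy, hd⟩
    obtain ⟨k, hk⟩ := evaln_complete.mp (Part.get_mem hd)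
    refine ⟨k, ?_, fun {j} _ => trivial⟩
    symm
    exact bexB_iff.mpr ⟨y, hy, Option.isSome_iff_exists.mpr ⟨_, hk⟩⟩

/-- the code of the given positive equivalence relation -/
noncomputable def ec (η : PosEq) : Code := Denumerable.ofNat Code (Classical.choose η.re)

lemma rel_iff_evalDom {x y : ℕ} : η.rel x y ↔ (eval (ec η) (Nat.pair x y)).Dom :=
  Classical.choose_spec η.re x y

/-- THE learner -/
noncomputable def learner (η : PosEq) : Learner :=
  fun σ => some (Encodable.encode ((c1 (ec η)).curry (mval (ec η) σ)))

lemma learner_computable : Computable (learner η) := by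
  apply Primrec.to_comp
  have hpred : Primrec₂ (fun (q : List (Option ℕ) × ℕ) (o : Option ℕ) =>
      predB (ec η) q.1.length q.2 o) := by
    apply Primrec.option_casesOn (o := fun (x : (List (Option ℕ) × ℕ) × Option ℕ) => x.2)
      (f := fun _ => false)
      (g := fun (x : (List (Option ℕ) × ℕ) × Option ℕ) (v : ℕ) =>
        (evaln x.1.1.length (ec η) (Nat.pair v x.1.2)).isSome)
    · exact Primrec.snd
    · exact Primrec.const false
    · exact Primrec.option_isSome.comp (primrec_evaln.comp
        (((Primrec.list_length.comp (Primrec.fst.comp (Primrec.fst.comp Primrec.fst))).pair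
          (Primrec.const (ec η))).pair
          (Primrec₂.natPair.comp Primrec.snd (Primrec.snd.comp (Primrec.fst.comp Primrec.fst)))))
  have hfind : Primrec (fun q : List (Option ℕ) × ℕ =>
      q.1.findIdx (predB (ec η) q.1.length q.2)) :=
    Primrec.list_findIdx (f := fun q : List (Option ℕ) × ℕ => q.1) Primrec.fst hpred
  have hconf : Primrec₂ (fun (σ : List (Option ℕ)) (y : ℕ) => confB (ec η) σ y) :=
    PrimrecPred.decide (Primrec.nat_lt.comp hfind (Primrec.list_length.comp Primrec.fst))
  have hmval : Primrec (mval (ec η)) := by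
    apply Primrec.list_findIdx (f := fun σ : List (Option ℕ) => List.range (σ.length + 1))
      (p := fun (σ : List (Option ℕ)) (y : ℕ) => ! confB (ec η) σ y)
    · exact Primrec.list_range.comp (Primrec.succ.comp Primrec.list_length)
    · exact (Primrec.dom_bool Bool.not).comp hconf
  exact Primrec.option_some.comp
    (Primrec.encode.comp (primrec₂_curry.comp (Primrec.const (c1 (ec η))) hmval))

lemma confB_sound {σ : List (Option ℕ)} {y : ℕ} (h : confB (ec η) σ y = true) :
    ∃ x, some x ∈ σ ∧ η.rel x y := by
  obtain ⟨x, hx, hs⟩ := confB_iff.mp h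
  obtain ⟨v, hv⟩ := Option.isSome_iff_exists.mp hs
  exact ⟨x, hx, rel_iff_evalDom.mpr (Part.dom_iff_mem.mpr ⟨v, evaln_sound hv⟩)⟩

lemma conf_eventually {T : ℕ → Option ℕ} {x y i : ℕ} (hT : T i = some x) (hrel : η.rel x y) :
    ∃ S, ∀ s, S ≤ s → confB (ec η) (seg T s) y = true := by
  have hd : (eval (ec η) (Nat.pair x y)).Dom := rel_iff_evalDom.mp hrel
  obtain ⟨k, hk⟩ := evaln_complete.mp (Part.get_mem hd)
  refine ⟨max (i+1) k, fun s hs => ?_⟩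
  apply confB_iff.mpr
  refine ⟨x, mem_seg_iff.mpr ⟨i, by omega, hT⟩, ?_⟩
  rw [seg_length]
  exact Option.isSome_iff_exists.mpr ⟨_, evaln_mono (by omega) hk⟩

lemma mval_converges {T : ℕ → Option ℕ} {z : ℕ}
    (hzn : ∀ x ∈ cntT T, ¬ η.rel x z)
    (hlt : ∀ y, y < z → ∃ x ∈ cntT T, η.rel x y) :
    ∃ S, ∀ s, S ≤ s → mval (ec η) (seg T s) = z := by
  have hzfalse : ∀ s, confB (ec η) (seg T s) z = false := by
    intro s
    rw [Bool.eq_false_iff]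
    intro hc
    obtain ⟨x, hxσ, hrel⟩ := confB_sound hc
    obtain ⟨j, _, hj⟩ := mem_seg_iff.mp hxσ
    exact hzn x ⟨j, hj⟩ hrel
  have key : ∀ k, k ≤ z → ∃ S, ∀ s, S ≤ s → ∀ y, y < k → confB (ec η) (seg T s) y = true := by
    intro k
    induction k with
    | zero => exact fun _ => ⟨0, fun s _ y hy => absurd hy (by omega)⟩
    | succ k ih =>
      intro hk
      obtain ⟨S1, h1⟩ := ih (by omega)
      obtain ⟨x, ⟨j, hj⟩, hrel⟩ := hlt k (by omega)
      obtain ⟨S2, h2⟩ := conf_eventually hj hrel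
      refine ⟨max S1 S2, fun s hs y hy => ?_⟩
      rcases Nat.lt_or_ge y k with h | h
      · exact h1 s (by omega) y h
      · have : y = k := by omega
        subst this
        exact h2 s (by omega)
  obtain ⟨S, hS⟩ := key z le_rfl
  refine ⟨max S z, fun s hs => ?_⟩
  apply mval_eq
  · rw [seg_length]; omega
  · exact hzfalse s
  · exact fun y hy => hS s (by omega) y hy

lemma W_learner_hyp (m : ℕ) :
    W (Encodable.encode ((c1 (ec η)).curry m)) = {z | ∃ y, y < m ∧ η.rel y z} := by
  rw [W_curry_c1]
  ext z
  simp only [Set.mem_setOf_eq]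
  constructor
  · rintro ⟨y, hy, hd⟩; exact ⟨y, hy, rel_iff_evalDom.mpr hd⟩
  · rintro ⟨y, hy, hr⟩; exact ⟨y, hy, rel_iff_evalDom.mp hr⟩

/-- The learner weakly confidently learns the ascending family. -/
lemma learner_wconf : WConfLearnsIn W (learner η) (ascendingFamily η) := by
  constructor
  · -- explanatory learning
    rintro L ⟨n, rfl⟩ T hT
    have hcnt : cntT T = A η n := hT
    have hzn : ∀ x ∈ cntT T, ¬ η.rel x (a η n) := by
      intro x hx hrel
      rw [hcnt] at hx
      exact a_not_mem_A n (A_closed hx hrel)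
    have hlt : ∀ y, y < a η n → ∃ x ∈ cntT T, η.rel x y := by
      intro y hy
      refine ⟨y, ?_, rel_self η y⟩
      rw [hcnt]
      exact mem_A_of_lt_a hy
    obtain ⟨S, hS⟩ := mval_converges hzn hlt
    refine ⟨S, Encodable.encode ((c1 (ec η)).curry (a η n)), ?_, ?_, ?_⟩
    · show some _ = some _
      rw [hS S le_rfl]
    · rw [W_learner_hyp, A_eq_cl]
    · intro j hj
      show some _ = some _
      rw [hS j hj, hS S le_rfl]
  · -- weak confidence
    rintro T ⟨L, ⟨k, rfl⟩, hsub⟩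
    have hne : {y | ∀ x ∈ cntT T, ¬ η.rel x y}.Nonempty := by
      refine ⟨a η k, fun x hx hrel => ?_⟩
      exact a_not_mem_A k (A_closed (hsub hx) hrel)
    set z := sInf {y | ∀ x ∈ cntT T, ¬ η.rel x y} with hz
    have hzn : ∀ x ∈ cntT T, ¬ η.rel x z := Nat.sInf_mem hne
    have hlt : ∀ y, y < z → ∃ x ∈ cntT T, η.rel x y := by
      intro y hy
      by_contra hcon
      push_neg at hcon
      have : z ≤ y := Nat.sInf_le (fun x hx hrel => hcon x hx hrel)
      omega
    obtain ⟨S, hS⟩ := mval_converges hzn hlt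
    refine ⟨S, fun j hj => ?_⟩
    show some _ = some _
    rw [hS j hj, hS S le_rfl]

/-! #### Non-confident-learnability -/

lemma step_lemma (M : Learner) (hEx : ExLearnsIn W M (ascendingFamily η))
    (σ : List (Option ℕ)) (n : ℕ) (hn : 1 ≤ n) (hσ : cntL σ ⊆ A η n) :
    ∃ τ : List (Option ℕ), τ.take σ.length = σ ∧ cntL τ ⊆ A η (n+1) ∧
      σ.length < τ.length ∧
      ∃ i, σ.length ≤ i ∧ i < τ.length ∧ M (τ.take i) ≠ M τ := by
  obtain ⟨T1, hT1text, hT1seg⟩ := exists_text (A η n) ⟨a η 0, a_mem_A hn⟩ σ hσ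
  obtain ⟨p, e, hpe, hWe, hlock⟩ := hEx (A η n) ⟨n, rfl⟩ T1 hT1text
  set p' := max p σ.length with hp'
  have hMp' : M (seg T1 p') = some e := by
    rw [hlock p' (le_max_left _ _)]; exact hpe
  set τ1 := seg T1 p' with hτ1
  have hτ1len : τ1.length = p' := seg_length T1 p'
  have hτ1cnt : cntL τ1 ⊆ A η n := by
    intro x hx
    have := cntL_seg_subset hx
    rwa [hT1text] at this
  obtain ⟨T2, hT2text, hT2seg⟩ := exists_text (A η (n+1)) ⟨a η 0, a_mem_A (by omega)⟩ τ1
    (hτ1cnt.trans (A_mono (Nat.le_succ n)))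
  obtain ⟨q, e', hqe, hWe', hlock2⟩ := hEx (A η (n+1)) ⟨n+1, rfl⟩ T2 hT2text
  set q' := max q (p'+1) with hq'
  have hMq' : M (seg T2 q') = some e' := by
    rw [hlock2 q' (le_max_left _ _)]; exact hqe
  set τ := seg T2 q' with hτ
  have hτlen : τ.length = q' := seg_length T2 q'
  have hseg2 : seg T2 p' = τ1 := by
    rw [← hτ1len]; exact hT2seg
  have htk : τ.take p' = τ1 := by
    rw [hτ, seg_take T2 (le_max_right q (p'+1) |>.trans' (by omega))]
    exact hseg2
  have hτcnt : cntL τ ⊆ A η (n+1) := by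
    intro x hx
    have := cntL_seg_subset hx
    rwa [hT2text] at this
  have hene : e ≠ e' := by
    intro he
    apply A_ne (Nat.lt_succ_self n)
    rw [← hWe, ← hWe', he]
  refine ⟨τ, ?_, hτcnt, ?_, p', le_max_right _ _, ?_, ?_⟩
  · have : τ.take σ.length = (τ.take p').take σ.length := by
      rw [List.take_take, Nat.min_eq_left (le_max_right p σ.length)]
    rw [this, htk, hτ1, seg_take T1 (le_max_right p σ.length), hT1seg]
  · omega
  · omega
  · intro hcontra
    rw [htk, hMp', hMq'] at hcontra
    exact hene (Option.some_inj.mp hcontra)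

/-- the chain of finite sequences witnessing divergence of a would-be confident learner -/
noncomputable def chain (M : Learner) (hEx : ExLearnsIn W M (ascendingFamily η)) :
    (k : ℕ) → {σ : List (Option ℕ) // cntL σ ⊆ A η (k+1)}
  | 0 => ⟨[], by intro x hx; exact absurd hx (by simp [cntL])⟩
  | k+1 =>
    let prev := chain M hEx k
    let h := step_lemma M hEx prev.1 (k+1) (by omega) prev.2
    ⟨Classical.choose h, (Classical.choose_spec h).2.1⟩

lemma chain_spec (M : Learner) (hEx : ExLearnsIn W M (ascendingFamily η)) (k : ℕ) :
    ((chain M hEx (k+1)).1).take ((chain M hEx k).1).length = (chain M hEx k).1 ∧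
    ((chain M hEx k).1).length < ((chain M hEx (k+1)).1).length ∧
    ∃ i, ((chain M hEx k).1).length ≤ i ∧ i < ((chain M hEx (k+1)).1).length ∧
      M (((chain M hEx (k+1)).1).take i) ≠ M ((chain M hEx (k+1)).1) := by
  have h := Classical.choose_spec (step_lemma M hEx (chain M hEx k).1 (k+1) (by omega)
    (chain M hEx k).2)
  exact ⟨h.1, h.2.2.1, h.2.2.2⟩

theorem not_conf_learnable : ¬ ConfLearnable (ascendingFamily η) := by
  rintro ⟨M, -, hEx, hConv⟩
  -- abbreviations
  set c := fun k => (chain (η := η) M hEx k).1 with hc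
  have hspec : ∀ k, ((c (k+1)).take (c k).length = c k) ∧
      (c k).length < (c (k+1)).length ∧
      ∃ i, (c k).length ≤ i ∧ i < (c (k+1)).length ∧
        M ((c (k+1)).take i) ≠ M (c (k+1)) := fun k => chain_spec (η := η) M hEx k
  have hlen : ∀ k, k ≤ (c k).length := by
    intro k
    induction k with
    | zero => omega
    | succ k ih => have := (hspec k).2.1; omega
  -- prefix coherence
  have hpre : ∀ k l, k ≤ l → (c l).take (c k).length = c k := by
    intro k l hkl
    induction l with
    | zero =>
      have : k = 0 := by omega
      subst this
      exact List.take_length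
    | succ l ih =>
      rcases Nat.lt_or_ge k (l+1) with h | h
      · have hk : k ≤ l := by omega
        have hlen2 : (c k).length ≤ (c l).length := by
          have h3 := congrArg List.length (ih hk)
          rw [List.length_take] at h3
          exact inf_eq_left.mp h3
        calc (c (l+1)).take (c k).length
            = ((c (l+1)).take (c l).length).take (c k).length := by
              rw [List.take_take, Nat.min_eq_left hlen2]
          _ = (c l).take (c k).length := by rw [(hspec l).1]
          _ = c k := ih hk
      · have : k = l+1 := by omega
        subst this
        exact List.take_length
  -- the diagonal text
  set T : ℕ → Option ℕ := fun i => (c (i+1)).getD i none with hT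
  have hgetT : ∀ k i, i < (c k).length → T i = (c k).getD i none := by
    intro k i hik
    have hi1 : i < (c (i+1)).length := lt_of_lt_of_le (by omega) (hlen (i+1))
    set m := max (i+1) k with hm
    have h1 : (c m).take (c (i+1)).length = c (i+1) := hpre (i+1) m (le_max_left _ _)
    have h2 : (c m).take (c k).length = c k := hpre k m (le_max_right _ _)
    have hp1 : c (i+1) <+: c m := by
      rw [← h1]; exact List.take_prefix _ _
    have hp2 : c k <+: c m := by
      rw [← h2]; exact List.take_prefix _ _
    show (c (i+1)).getD i none = (c k).getD i none
    rw [List.getD_eq_getElem _ _ hi1, List.getD_eq_getElem _ _ hik]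
    rw [hp1.getElem hi1, hp2.getElem hik]
  have hsegc : ∀ k j, j ≤ (c k).length → seg T j = (c k).take j := by
    intro k j hj
    apply List.ext_getElem
    · rw [seg_length, List.length_take, Nat.min_eq_left hj]
    · intro i h1 h2
      rw [seg_length] at h1
      have hik : i < (c k).length := by omega
      have : (seg T j)[i] = T i := by
        simp [seg]
      rw [this, hgetT k i hik, List.getD_eq_getElem _ _ hik]
      exact (List.getElem_take).symm
  -- contradiction with convergence
  obtain ⟨N, hN⟩ := hConv T
  obtain ⟨i, hi1, hi2, hne⟩ := (hspec N).2.2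
  have hN1 : N ≤ (c N).length := hlen N
  have hiN : N ≤ i := by omega
  have hjN : N ≤ (c (N+1)).length := by have := hlen (N+1); omega
  have e1 : seg T i = (c (N+1)).take i := hsegc (N+1) i (by omega)
  have e2 : seg T ((c (N+1)).length) = c (N+1) := by
    rw [hsegc (N+1) _ le_rfl, List.take_length]
  apply hne
  rw [← e1, ← e2, hN i hiN, hN ((c (N+1)).length) hjN]

end Aux

/-- For every positive equivalence relation η, the ascending
family 𝒜_η is weakly confidently learnable but not confidently learnable. -/
theorem stmt14 (η : PosEq) :
    WConfLearnable (ascendingFamily η) ∧ ¬ ConfLearnable (ascendingFamily η) := by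
  exact ⟨⟨learner η, learner_computable, learner_wconf⟩, not_conf_learnable⟩

end PEL
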